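/- For every S ⊆ {H¹, H², H³}: H_n(C_4, S \ {H³}) ≤ H_n(C_4, S) ≤ 3ⁿ · H_n(C_4, S \ {H³}). -/

import Mathlib

/-- `H` is (the edge graph of) a Hamiltonian path of the complete graph on `Fin n`. -/
def IsHamPath {n : ℕ} (H : SimpleGraph (Fin n)) : Prop :=
  ∃ f : Equiv.Perm (Fin n), ∀ u v, H.Adj u v ↔
    ∃ i j : Fin n, (j : ℕ) = (i : ℕ) + 1 ∧ ((u = f i ∧ v = f j) ∨ (u = f j ∧ v = f i))

/-- `a, b, c, d` span a 4-cycle (in this cyclic order) in the graph `U`. -/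
def isC4in {V : Type*} (U : SimpleGraph V) (a b c d : V) : Prop :=
  (a ≠ b ∧ a ≠ c ∧ a ≠ d ∧ b ≠ c ∧ b ≠ d ∧ c ≠ d) ∧
  U.Adj a b ∧ U.Adj b c ∧ U.Adj c d ∧ U.Adj d a

/-- `P` contains two (cyclically) consecutive edges of the 4-cycle `a b c d`. -/
def run2 {V : Type*} (P : SimpleGraph V) (a b c d : V) : Prop :=
  (P.Adj a b ∧ P.Adj b c) ∨ (P.Adj b c ∧ P.Adj c d) ∨
  (P.Adj c d ∧ P.Adj d a) ∨ (P.Adj d a ∧ P.Adj a b)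

/-- `P` contains three (cyclically) consecutive edges of the 4-cycle `a b c d`. -/
def run3 {V : Type*} (P : SimpleGraph V) (a b c d : V) : Prop :=
  (P.Adj a b ∧ P.Adj b c ∧ P.Adj c d) ∨ (P.Adj b c ∧ P.Adj c d ∧ P.Adj d a) ∨
  (P.Adj c d ∧ P.Adj d a ∧ P.Adj a b) ∨ (P.Adj d a ∧ P.Adj a b ∧ P.Adj b c)

/-- The 4-cycle `a b c d` is created by the paths `P` and `Q` in the way `H^r`
(`r ∈ {1,2,3}`): the longest run of consecutive `C₄`-edges contained in one of the two
paths has length exactly `r`. -/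
def hasWay {V : Type*} (P Q : SimpleGraph V) (r : ℕ) (a b c d : V) : Prop :=
  isC4in (P ⊔ Q) a b c d ∧
  ((r = 3 ∧ (run3 P a b c d ∨ run3 Q a b c d)) ∨
   (r = 2 ∧ (run2 P a b c d ∨ run2 Q a b c d) ∧ ¬ (run3 P a b c d ∨ run3 Q a b c d)) ∨
   (r = 1 ∧ ¬ (run2 P a b c d ∨ run2 Q a b c d)))

/-- `P` and `Q` create some `C₄` in one of the ways belonging to `S ⊆ {1,2,3}`. -/
def createsIn {n : ℕ} (S : Finset ℕ) (P Q : SimpleGraph (Fin n)) : Prop :=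
  ∃ a b c d : Fin n, ∃ r ∈ S, hasWay P Q r a b c d

/-- `H_n(C₄, S)`: the maximum number of Hamiltonian paths of `K_n` such that every pair
creates a `C₄` in one of the ways in `S`. -/
noncomputable def HC4 (n : ℕ) (S : Finset ℕ) : ℕ :=
  sSup {k | ∃ F : Finset (SimpleGraph (Fin n)), (∀ H ∈ F, IsHamPath H) ∧
    (∀ H₁ ∈ F, ∀ H₂ ∈ F, H₁ ≠ H₂ → createsIn S H₁ H₂) ∧ F.card = k}

/- ### Auxiliary material -/

/-- The set of cardinalities of valid families. -/
def HC4set (n : ℕ) (S : Finset ℕ) : Set ℕ :=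
  {k | ∃ F : Finset (SimpleGraph (Fin n)), (∀ H ∈ F, IsHamPath H) ∧
    (∀ H₁ ∈ F, ∀ H₂ ∈ F, H₁ ≠ H₂ → createsIn S H₁ H₂) ∧ F.card = k}

lemma HC4_eq (n : ℕ) (S : Finset ℕ) : HC4 n S = sSup (HC4set n S) := rfl

lemma HC4set_bddAbove (n : ℕ) (S : Finset ℕ) : BddAbove (HC4set n S) := by
  classical
  refine ⟨Fintype.card (SimpleGraph (Fin n)), ?_⟩
  rintro k ⟨F, -, -, rfl⟩
  exact Finset.card_le_univ F

lemma zero_mem_HC4set (n : ℕ) (S : Finset ℕ) : 0 ∈ HC4set n S :=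
  ⟨∅, by simp, by simp, by simp⟩

/-- The canonical Hamiltonian path on `Fin n`. -/
def canonPath (n : ℕ) : SimpleGraph (Fin n) where
  Adj u v := ∃ i j : Fin n, (j : ℕ) = (i : ℕ) + 1 ∧ ((u = i ∧ v = j) ∨ (u = j ∧ v = i))
  symm := by
    constructor
    rintro u v ⟨i, j, hij, h⟩
    exact ⟨i, j, hij, h.elim (fun h => Or.inr ⟨h.2, h.1⟩) (fun h => Or.inl ⟨h.2, h.1⟩)⟩
  loopless := by
    constructor
    rintro u ⟨i, j, hij, (⟨h1, h2⟩ | ⟨h1, h2⟩)⟩ <;>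
    · subst h1; rw [h2] at hij; omega

lemma canonPath_isHamPath (n : ℕ) : IsHamPath (canonPath n) := by
  refine ⟨Equiv.refl _, fun u v => ?_⟩
  simp only [Equiv.refl_apply]
  exact Iff.rfl

lemma one_mem_HC4set (n : ℕ) (S : Finset ℕ) : 1 ∈ HC4set n S := by
  refine ⟨{canonPath n}, ?_, ?_, Finset.card_singleton _⟩
  · intro H hH
    rw [Finset.mem_singleton] at hH
    subst hH; exact canonPath_isHamPath n
  · intro H₁ h₁ H₂ h₂ hne
    rw [Finset.mem_singleton] at h₁ h₂
    exact absurd (h₁.trans h₂.symm) hne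

lemma one_le_HC4 (n : ℕ) (S : Finset ℕ) : 1 ≤ HC4 n S :=
  le_csSup (HC4set_bddAbove n S) (one_mem_HC4set n S)

/-- Core combinatorial lemma: if both paths are "compliant" with a 3-coloring `c`
(colors increase by one along the path), then three consecutive path-edges plus a
closing edge cannot exist. -/
lemma core {n : ℕ} {P Q : SimpleGraph (Fin n)} {c : Fin n → ZMod 3} {p : Fin n → ℕ}
    (eP : ∀ u v, P.Adj u v →
      (p v = p u + 1 ∧ c v = c u + 1) ∨ (p u = p v + 1 ∧ c u = c v + 1))
    (eQ : ∀ u v, Q.Adj u v → c v = c u + 1 ∨ c u = c v + 1)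
    (hpinj : ∀ u v : Fin n, u ≠ v → p u ≠ p v)
    {w x y z : Fin n} (hwy : w ≠ y) (hxz : x ≠ z)
    (h1 : P.Adj w x) (h2 : P.Adj x y) (h3 : P.Adj y z)
    (h4 : P.Adj z w ∨ Q.Adj z w) : False := by
  have key3 : ∀ t : ZMod 3, t + 1 + 1 + 1 = t := by decide
  have ne1 : ∀ t : ZMod 3, ¬ t = t + 1 := by decide
  have final : c z = c w → False := by
    intro hzw
    rcases h4 with h | h
    · rcases eP z w h with ⟨-, hcc⟩ | ⟨-, hcc⟩
      · rw [hzw] at hcc; exact ne1 _ hcc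
      · rw [hzw] at hcc; exact ne1 _ hcc
    · rcases eQ z w h with hcc | hcc
      · rw [hzw] at hcc; exact ne1 _ hcc
      · rw [hzw] at hcc; exact ne1 _ hcc
  have hwy' : p w ≠ p y := hpinj _ _ hwy
  have hxz' : p x ≠ p z := hpinj _ _ hxz
  rcases eP w x h1 with ⟨q1, c1⟩ | ⟨q1, c1⟩ <;>
    rcases eP x y h2 with ⟨q2, c2⟩ | ⟨q2, c2⟩ <;>
      rcases eP y z h3 with ⟨q3, c3⟩ | ⟨q3, c3⟩ <;>
        first
          | omega
          | exact final (by rw [c3, c2, c1]; exact key3 _)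
          | exact final (by rw [c1, c2, c3]; exact (key3 _).symm)

/-- If both paths are compliant with the 3-coloring `c`, no 4-cycle is created
in the `H³` way. -/
lemma noWay3 {n : ℕ} {P Q : SimpleGraph (Fin n)} {fP fQ : Equiv.Perm (Fin n)}
    {c : Fin n → ZMod 3}
    (hP : ∀ u v, P.Adj u v ↔ ∃ i j : Fin n, (j : ℕ) = (i : ℕ) + 1 ∧
      ((u = fP i ∧ v = fP j) ∨ (u = fP j ∧ v = fP i)))
    (hcP : ∀ i j : Fin n, (j : ℕ) = (i : ℕ) + 1 → c (fP j) = c (fP i) + 1)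
    (hQ : ∀ u v, Q.Adj u v ↔ ∃ i j : Fin n, (j : ℕ) = (i : ℕ) + 1 ∧
      ((u = fQ i ∧ v = fQ j) ∨ (u = fQ j ∧ v = fQ i)))
    (hcQ : ∀ i j : Fin n, (j : ℕ) = (i : ℕ) + 1 → c (fQ j) = c (fQ i) + 1)
    {v₁ v₂ v₃ v₄ : Fin n} (h : hasWay P Q 3 v₁ v₂ v₃ v₄) : False := by
  have eP : ∀ u v, P.Adj u v →
      (((fP.symm v : Fin n) : ℕ) = ((fP.symm u : Fin n) : ℕ) + 1 ∧ c v = c u + 1) ∨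
      (((fP.symm u : Fin n) : ℕ) = ((fP.symm v : Fin n) : ℕ) + 1 ∧ c u = c v + 1) := by
    intro u v huv
    obtain ⟨i, j, hij, hh⟩ := (hP u v).1 huv
    rcases hh with ⟨hu, hv⟩ | ⟨hu, hv⟩
    · subst hu; subst hv
      exact Or.inl ⟨by simp [hij], hcP i j hij⟩
    · subst hu; subst hv
      exact Or.inr ⟨by simp [hij], hcP i j hij⟩
  have eQ : ∀ u v, Q.Adj u v →
      (((fQ.symm v : Fin n) : ℕ) = ((fQ.symm u : Fin n) : ℕ) + 1 ∧ c v = c u + 1) ∨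
      (((fQ.symm u : Fin n) : ℕ) = ((fQ.symm v : Fin n) : ℕ) + 1 ∧ c u = c v + 1) := by
    intro u v huv
    obtain ⟨i, j, hij, hh⟩ := (hQ u v).1 huv
    rcases hh with ⟨hu, hv⟩ | ⟨hu, hv⟩
    · subst hu; subst hv
      exact Or.inl ⟨by simp [hij], hcQ i j hij⟩
    · subst hu; subst hv
      exact Or.inr ⟨by simp [hij], hcQ i j hij⟩
  have eP' : ∀ u v, P.Adj u v → c v = c u + 1 ∨ c u = c v + 1 :=
    fun u v h => (eP u v h).imp And.right And.right
  have eQ' : ∀ u v, Q.Adj u v → c v = c u + 1 ∨ c u = c v + 1 :=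
    fun u v h => (eQ u v h).imp And.right And.right
  have hpinjP : ∀ u v : Fin n, u ≠ v →
      ((fP.symm u : Fin n) : ℕ) ≠ ((fP.symm v : Fin n) : ℕ) :=
    fun u v hne hh => hne (fP.symm.injective (Fin.val_injective hh))
  have hpinjQ : ∀ u v : Fin n, u ≠ v →
      ((fQ.symm u : Fin n) : ℕ) ≠ ((fQ.symm v : Fin n) : ℕ) :=
    fun u v hne hh => hne (fQ.symm.injective (Fin.val_injective hh))
  obtain ⟨⟨d12, d13, d14, d23, d24, d34⟩, h12, h23, h34, h41⟩ := h.1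
  rw [SimpleGraph.sup_adj] at h12 h23 h34 h41
  have hr := h.2
  rcases hr with ⟨-, hrun⟩ | ⟨h32, -⟩ | ⟨h31, -⟩
  · rcases hrun with hP3 | hQ3
    · rcases hP3 with ⟨e1, e2, e3⟩ | ⟨e1, e2, e3⟩ | ⟨e1, e2, e3⟩ | ⟨e1, e2, e3⟩
      · exact core eP eQ' hpinjP d13 d24 e1 e2 e3 h41
      · exact core eP eQ' hpinjP d24 (Ne.symm d13) e1 e2 e3 h12
      · exact core eP eQ' hpinjP (Ne.symm d13) (Ne.symm d24) e1 e2 e3 h23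
      · exact core eP eQ' hpinjP (Ne.symm d24) d13 e1 e2 e3 h34
    · rcases hQ3 with ⟨e1, e2, e3⟩ | ⟨e1, e2, e3⟩ | ⟨e1, e2, e3⟩ | ⟨e1, e2, e3⟩
      · exact core eQ eP' hpinjQ d13 d24 e1 e2 e3 h41.symm
      · exact core eQ eP' hpinjQ d24 (Ne.symm d13) e1 e2 e3 h12.symm
      · exact core eQ eP' hpinjQ (Ne.symm d13) (Ne.symm d24) e1 e2 e3 h23.symm
      · exact core eQ eP' hpinjQ (Ne.symm d24) d13 e1 e2 e3 h34.symm
  · omega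
  · omega

theorem stmt13 (n : ℕ) (S : Finset ℕ) (hS : S ⊆ {1, 2, 3}) :
    HC4 n (S.erase 3) ≤ HC4 n S ∧ HC4 n S ≤ 3 ^ n * HC4 n (S.erase 3) := by
  classical
  constructor
  · rw [HC4_eq, HC4_eq]
    apply csSup_le_csSup (HC4set_bddAbove n S) ⟨0, zero_mem_HC4set n _⟩
    rintro k ⟨F, hHam, hPair, rfl⟩
    refine ⟨F, hHam, fun H₁ h₁ H₂ h₂ hne => ?_, rfl⟩
    obtain ⟨a, b, u, d, r, hr, hw⟩ := hPair H₁ h₁ H₂ h₂ hne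
    exact ⟨a, b, u, d, r, Finset.mem_of_mem_erase hr, hw⟩
  · by_cases hn : n = 0
    · subst hn
      have hsub : ∀ G H : SimpleGraph (Fin 0), G = H := by
        intro G H; ext u v; exact u.elim0
      have hle : HC4 0 S ≤ 1 := by
        rw [HC4_eq]
        apply csSup_le ⟨0, zero_mem_HC4set 0 S⟩
        rintro k ⟨F, -, -, rfl⟩
        exact Finset.card_le_one.mpr (fun a _ b _ => hsub a b)
      calc HC4 0 S ≤ 1 := hle
        _ ≤ 3 ^ 0 * HC4 0 (S.erase 3) := by simpa using one_le_HC4 0 (S.erase 3)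
    · -- main case : n ≥ 1
      have hnpos : 0 < n := Nat.pos_of_ne_zero hn
      set T := HC4 n (S.erase 3) with hT
      have hmem : HC4 n S ∈ HC4set n S := by
        rw [HC4_eq]
        exact Nat.sSup_mem ⟨0, zero_mem_HC4set n S⟩ (HC4set_bddAbove n S)
      obtain ⟨F, hHam, hPair, hcard⟩ := hmem
      rw [← hcard]
      -- choose a permutation representation for each member of F
      have hch : ∀ H : SimpleGraph (Fin n), ∃ f : Equiv.Perm (Fin n), H ∈ F →
          ∀ u v, H.Adj u v ↔ ∃ i j : Fin n, (j : ℕ) = (i : ℕ) + 1 ∧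
            ((u = f i ∧ v = f j) ∨ (u = f j ∧ v = f i)) := by
        intro H
        by_cases h : H ∈ F
        · obtain ⟨f, hf⟩ := hHam H h
          exact ⟨f, fun _ => hf⟩
        · exact ⟨Equiv.refl _, fun hh => absurd hh h⟩
      choose ff hff using hch
      set compliant : (Fin n → ZMod 3) → SimpleGraph (Fin n) → Prop :=
        fun c H => ∀ i j : Fin n, (j : ℕ) = (i : ℕ) + 1 → c (ff H j) = c (ff H i) + 1
        with hcompliant
      -- per-coloring upper bound
      have hup : ∀ c : Fin n → ZMod 3,
          (F.filter (fun H => compliant c H)).card ≤ T := by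
        intro c
        rw [hT, HC4_eq]
        apply le_csSup (HC4set_bddAbove n _)
        refine ⟨F.filter (fun H => compliant c H), ?_, ?_, rfl⟩
        · intro H hH
          exact hHam H (Finset.mem_of_mem_filter H hH)
        · intro H₁ h₁ H₂ h₂ hne
          obtain ⟨hm₁, hc₁⟩ := Finset.mem_filter.1 h₁
          obtain ⟨hm₂, hc₂⟩ := Finset.mem_filter.1 h₂
          obtain ⟨a, b, u, d, r, hr, hw⟩ := hPair H₁ hm₁ H₂ hm₂ hne
          refine ⟨a, b, u, d, r, Finset.mem_erase.2 ⟨?_, hr⟩, hw⟩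
          rintro rfl
          exact noWay3 (hff H₁ hm₁) hc₁ (hff H₂ hm₂) hc₂ hw
      -- per-path lower bound
      have hlow : ∀ H ∈ F,
          3 ≤ ((Finset.univ : Finset (Fin n → ZMod 3)).filter
            (fun c => compliant c H)).card := by
        intro H hH
        have hcard3 : ((Finset.univ : Finset (ZMod 3)).card = 3) := by simp
        have hle : (Finset.univ : Finset (ZMod 3)).card ≤
            ((Finset.univ : Finset (Fin n → ZMod 3)).filter
              (fun c => compliant c H)).card := by
          apply Finset.card_le_card_of_injOn
            (fun t => fun v => t + ((((ff H).symm v : Fin n) : ℕ) : ZMod 3))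
          · intro t _
            simp only [Finset.mem_coe, Finset.mem_filter, Finset.mem_univ, true_and, hcompliant]
            intro i j hij
            simp only [Equiv.symm_apply_apply]
            rw [hij]
            push_cast
            ring
          · intro t₁ _ t₂ _ hteq
            have := congrFun hteq (ff H ⟨0, hnpos⟩)
            simpa using this
        omega
      -- double counting
      have hsum : ∑ c : Fin n → ZMod 3, (F.filter (fun H => compliant c H)).card
          = ∑ H ∈ F, ((Finset.univ : Finset (Fin n → ZMod 3)).filter
              (fun c => compliant c H)).card := by
        simp only [Finset.card_filter]
        exact Finset.sum_comm
      have h3F : 3 * F.card ≤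
          ∑ c : Fin n → ZMod 3, (F.filter (fun H => compliant c H)).card := by
        rw [hsum]
        calc 3 * F.card = ∑ _H ∈ F, 3 := by
              rw [Finset.sum_const, smul_eq_mul, mul_comm]
          _ ≤ _ := Finset.sum_le_sum hlow
      have hsumup : ∑ c : Fin n → ZMod 3, (F.filter (fun H => compliant c H)).card
          ≤ 3 ^ n * T := by
        calc ∑ c : Fin n → ZMod 3, (F.filter (fun H => compliant c H)).card
            ≤ (Finset.univ : Finset (Fin n → ZMod 3)).card • T :=
              Finset.sum_le_card_nsmul _ _ T (fun c _ => hup c)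
          _ = 3 ^ n * T := by
              simp [Finset.card_univ, Fintype.card_fun]
      omega
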